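/- Let f : X → Y be a submersion and X₀, X₁ ⊆ X submanifolds with f|_{X₀}, f|_{X₁} of constant rank. Then the pair (X₀, X₁) satisfies Thom's condition A_f if and only if the closure of Π(T*_{X₁} X) in the relative cotangent bundle T*_f, restricted over X₀, is contained in Π(T*_{X₀} X), where Π : T*X → T*_f is the projection to the relative cotangent bundle. -/

import Mathlib

open Set Filter

set_option linter.unusedSectionVars false
set_option maxHeartbeats 1000000
set_option synthInstance.maxHeartbeats 1000000

section AuxiliaryLemmas

variable {G : Type*} [NormedAddCommGroup G] [InnerProductSpace ℝ G] [FiniteDimensional ℝ G]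

noncomputable def frameT {k : ℕ} (w : Fin k → G) : EuclideanSpace ℝ (Fin k) →L[ℝ] G :=
  ∑ i, (EuclideanSpace.proj i).smulRight (w i)

noncomputable def frameR {k : ℕ} (w : Fin k → G) : G →L[ℝ] EuclideanSpace ℝ (Fin k) :=
  ∑ i, (innerSL ℝ (w i)).smulRight (EuclideanSpace.single i 1)

lemma frameT_apply {k : ℕ} (w : Fin k → G) (x : EuclideanSpace ℝ (Fin k)) :
    frameT w x = ∑ i, x i • w i := by
  simp [frameT, EuclideanSpace.proj]

lemma frameR_apply {k : ℕ} (w : Fin k → G) (y : G) (j : Fin k) :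
    frameR w y j = inner ℝ (w j) y := by
  have : (∑ i : Fin k, (inner ℝ (w i) y : ℝ) • EuclideanSpace.single i (1:ℝ)) j
      = ∑ i : Fin k, (inner ℝ (w i) y : ℝ) * EuclideanSpace.single i (1:ℝ) j := by
    rw [WithLp.ofLp_sum]; exact Finset.sum_apply j Finset.univ _
  simp [frameR, this, EuclideanSpace.single_apply]

noncomputable def frameTL (k : ℕ) : (Fin k → G) →ₗ[ℝ] (EuclideanSpace ℝ (Fin k) →L[ℝ] G) where
  toFun := frameT
  map_add' w w' := by
    ext x; simp [frameT_apply, smul_add, Finset.sum_add_distrib]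
  map_smul' c w := by
    ext x; simp [frameT_apply, Finset.smul_sum, smul_comm _ c]

noncomputable def frameRL (k : ℕ) : (Fin k → G) →ₗ[ℝ] (G →L[ℝ] EuclideanSpace ℝ (Fin k)) where
  toFun := frameR
  map_add' w w' := by
    ext y j
    simp [frameR_apply, ContinuousLinearMap.add_apply, PiLp.add_apply, inner_add_left]
  map_smul' c w := by
    ext y j
    simp [frameR_apply, ContinuousLinearMap.smul_apply, PiLp.smul_apply, real_inner_smul_left]

attribute [irreducible] frameT frameR

lemma frameT_cont (k : ℕ) : Continuous (frameT : (Fin k → G) → _) :=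
  by have := (frameTL (G := G) k).continuous_of_finiteDimensional; exact this

lemma frameR_cont (k : ℕ) : Continuous (frameR : (Fin k → G) → _) :=
  by have := (frameRL (G := G) k).continuous_of_finiteDimensional; exact this

lemma exists_onb (τ : Submodule ℝ G) (k : ℕ) (hτ : Module.finrank ℝ τ = k) :
    ∃ g : Fin k → G, Orthonormal ℝ g ∧ (∀ i, g i ∈ τ) ∧
      τ = Submodule.span ℝ (Set.range g) := by
  let o := (stdOrthonormalBasis ℝ τ).reindex (finCongr hτ)
  refine ⟨fun i => (o i : G), ?_, fun i => (o i).2, ?_⟩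
  · rw [orthonormal_iff_ite]
    intro i j
    have := o.orthonormal
    rw [orthonormal_iff_ite] at this
    simpa [Submodule.coe_inner] using this i j
  · have hon : Orthonormal ℝ (fun i => (o i : G)) := by
      rw [orthonormal_iff_ite]
      intro i j
      have := o.orthonormal
      rw [orthonormal_iff_ite] at this
      simpa [Submodule.coe_inner] using this i j
    have hle : Submodule.span ℝ (Set.range fun i => (o i : G)) ≤ τ := by
      rw [Submodule.span_le]
      rintro _ ⟨i, rfl⟩
      exact (o i).2
    refine (Submodule.eq_of_le_of_finrank_eq hle ?_).symm
    rw [finrank_span_eq_card hon.linearIndependent, hτ, Fintype.card_fin]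

lemma annih_approx (k : ℕ) (τ : Submodule ℝ G) (τs : ℕ → Submodule ℝ G)
    (hτ : Module.finrank ℝ τ = k) (hτs : ∀ n, Module.finrank ℝ (τs n) = k)
    (hconv : ∀ v ∈ τ, ∃ u : ℕ → G, (∀ n, u n ∈ τs n) ∧ Tendsto u atTop (nhds v))
    (ξ : G →L[ℝ] ℝ) (hξ : ∀ v ∈ τ, ξ v = 0) :
    ∃ ξs : ℕ → G →L[ℝ] ℝ, (∀ n, ∀ v ∈ τs n, ξs n v = 0) ∧ Tendsto ξs atTop (nhds ξ) := by
  obtain ⟨g, hgon, hgmem, hgspan⟩ := exists_onb τ k hτ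
  choose u humem hut using fun i => hconv (g i) (hgmem i)
  have hwt : Tendsto (fun n i => u i n) atTop (nhds g) := tendsto_pi_nhds.2 fun i => hut i
  have hRT : (frameR g).comp (frameT g) = 1 := by
    ext x j
    have h1 : frameR g (frameT g x) j = inner ℝ (g j) (frameT g x) := frameR_apply g _ j
    rw [ContinuousLinearMap.comp_apply, h1, frameT_apply, hgon.inner_right_fintype]
    rfl
  have hTt : Tendsto (fun n => frameT (fun i => u i n)) atTop (nhds (frameT g)) :=
    ((frameT_cont k).tendsto g).comp hwt
  have hRt : Tendsto (fun n => frameR (fun i => u i n)) atTop (nhds (frameR g)) :=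
    ((frameR_cont k).tendsto g).comp hwt
  have hSt : Tendsto (fun n => (frameR (fun i => u i n)).comp (frameT (fun i => u i n))) atTop
      (nhds (1 : EuclideanSpace ℝ (Fin k) →L[ℝ] EuclideanSpace ℝ (Fin k))) := by
    rw [← hRT]
    have hc := (isBoundedBilinearMap_comp (𝕜 := ℝ)
      (E := EuclideanSpace ℝ (Fin k)) (F := G) (G := EuclideanSpace ℝ (Fin k))).continuous
    exact (hc.tendsto (frameR g, frameT g)).comp (hRt.prodMk_nhds hTt)
  have hev : ∀ᶠ n in atTop, IsUnit ((frameR (fun i => u i n)).comp (frameT (fun i => u i n))) :=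
    hSt.eventually (Units.isOpen.eventually_mem isUnit_one)
  have hinv : Tendsto (fun n => Ring.inverse ((frameR (fun i => u i n)).comp (frameT (fun i => u i n)))) atTop
      (nhds (1 : EuclideanSpace ℝ (Fin k) →L[ℝ] EuclideanSpace ℝ (Fin k))) := by
    have := (NormedRing.inverse_continuousAt
      (1 : (EuclideanSpace ℝ (Fin k) →L[ℝ] EuclideanSpace ℝ (Fin k))ˣ)).tendsto.comp hSt
    simpa [Ring.inverse_one, Function.comp_def] using this
  have hPt : Tendsto (fun n => (frameT (fun i => u i n)).comp
        ((Ring.inverse ((frameR (fun i => u i n)).comp (frameT (fun i => u i n)))).comp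
          (frameR (fun i => u i n)))) atTop
      (nhds ((frameT g).comp (frameR g))) := by
    have hc1 := (isBoundedBilinearMap_comp (𝕜 := ℝ)
      (E := G) (F := EuclideanSpace ℝ (Fin k)) (G := EuclideanSpace ℝ (Fin k))).continuous
    have h1 : Tendsto (fun n => (Ring.inverse ((frameR (fun i => u i n)).comp
          (frameT (fun i => u i n)))).comp (frameR (fun i => u i n))) atTop
        (nhds ((1 : EuclideanSpace ℝ (Fin k) →L[ℝ] EuclideanSpace ℝ (Fin k)).comp (frameR g))) :=
      (hc1.tendsto (1, frameR g)).comp (hinv.prodMk_nhds hRt)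
    rw [ContinuousLinearMap.one_def, ContinuousLinearMap.id_comp] at h1
    have hc2 := (isBoundedBilinearMap_comp (𝕜 := ℝ)
      (E := G) (F := EuclideanSpace ℝ (Fin k)) (G := G)).continuous
    exact (hc2.tendsto (frameT g, frameR g)).comp (hTt.prodMk_nhds h1)
  classical
  refine ⟨fun n =>
    if h : IsUnit ((frameR (fun i => u i n)).comp (frameT (fun i => u i n))) then
      ξ.comp (ContinuousLinearMap.id ℝ G - (frameT (fun i => u i n)).comp
        ((Ring.inverse ((frameR (fun i => u i n)).comp (frameT (fun i => u i n)))).comp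
          (frameR (fun i => u i n))))
    else 0, ?_, ?_⟩
  · intro n v hv
    by_cases h : IsUnit ((frameR (fun i => u i n)).comp (frameT (fun i => u i n)))
    · beta_reduce
      rw [dif_pos h]
      have hfix : ∀ c, Ring.inverse ((frameR (fun i => u i n)).comp (frameT (fun i => u i n)))
          ((frameR (fun i => u i n)) ((frameT (fun i => u i n)) c)) = c := by
        intro c
        have hmc := Ring.inverse_mul_cancel _ h
        calc Ring.inverse ((frameR (fun i => u i n)).comp (frameT (fun i => u i n)))
              ((frameR (fun i => u i n)) ((frameT (fun i => u i n)) c))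
            = (Ring.inverse ((frameR (fun i => u i n)).comp (frameT (fun i => u i n))) *
                ((frameR (fun i => u i n)).comp (frameT (fun i => u i n)))) c := rfl
          _ = (1 : EuclideanSpace ℝ (Fin k) →L[ℝ] EuclideanSpace ℝ (Fin k)) c := by rw [hmc]
          _ = c := rfl
      have hinj : Function.Injective (frameT (fun i => u i n)) := by
        intro a b hab
        have := congrArg (fun z => Ring.inverse
          ((frameR (fun i => u i n)).comp (frameT (fun i => u i n)))
          ((frameR (fun i => u i n)) z)) hab
        simpa [hfix] using this
      have hrange : LinearMap.range ((frameT (fun i => u i n)) :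
          EuclideanSpace ℝ (Fin k) →ₗ[ℝ] G) = τs n := by
        apply Submodule.eq_of_le_of_finrank_eq
        · rintro _ ⟨c, rfl⟩
          show (frameT (fun i => u i n)) c ∈ τs n
          rw [frameT_apply]
          exact Submodule.sum_smul_mem _ _ fun i _ => humem i n
        · rw [LinearMap.finrank_range_of_inj hinj, finrank_euclideanSpace_fin, hτs n]
      have hvr : v ∈ LinearMap.range ((frameT (fun i => u i n)) :
          EuclideanSpace ℝ (Fin k) →ₗ[ℝ] G) := hrange ▸ hv
      obtain ⟨c, hc⟩ := hvr
      have : ((frameT (fun i => u i n)).comp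
          ((Ring.inverse ((frameR (fun i => u i n)).comp (frameT (fun i => u i n)))).comp
            (frameR (fun i => u i n)))) v = v := by
        rw [← hc]
        show (frameT (fun i => u i n)) (Ring.inverse
          ((frameR (fun i => u i n)).comp (frameT (fun i => u i n)))
          ((frameR (fun i => u i n)) ((frameT (fun i => u i n)) c))) = _
        rw [hfix]
        rfl
      simp [ContinuousLinearMap.comp_apply, ContinuousLinearMap.sub_apply, this]
    · beta_reduce
      rw [dif_neg h]
      rfl
  · have h2 : Tendsto (fun n => ContinuousLinearMap.id ℝ G - (frameT (fun i => u i n)).comp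
        ((Ring.inverse ((frameR (fun i => u i n)).comp (frameT (fun i => u i n)))).comp
          (frameR (fun i => u i n)))) atTop
        (nhds (ContinuousLinearMap.id ℝ G - (frameT g).comp (frameR g))) :=
      tendsto_const_nhds.sub hPt
    have h3 : Tendsto (fun n => ξ.comp (ContinuousLinearMap.id ℝ G -
        (frameT (fun i => u i n)).comp
        ((Ring.inverse ((frameR (fun i => u i n)).comp (frameT (fun i => u i n)))).comp
          (frameR (fun i => u i n))))) atTop
        (nhds (ξ.comp (ContinuousLinearMap.id ℝ G - (frameT g).comp (frameR g)))) :=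
      (((ContinuousLinearMap.isBoundedLinearMap_comp_left (𝕜 := ℝ) (E := G)
        ξ).continuous).tendsto _).comp h2
    have hfin : ξ.comp (ContinuousLinearMap.id ℝ G - (frameT g).comp (frameR g)) = ξ := by
      ext v
      have hmem : (frameT g) ((frameR g) v) ∈ τ := by
        rw [frameT_apply]
        exact Submodule.sum_smul_mem _ _ fun i _ => hgmem i
      simp [ContinuousLinearMap.comp_apply, ContinuousLinearMap.sub_apply, map_sub,
        hξ _ hmem]
    rw [hfin] at h3
    refine h3.congr' ?_
    filter_upwards [hev] with n h
    rw [dif_pos h]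

lemma mem_of_forall_annih (τ : Submodule ℝ G) (v : G)
    (h : ∀ ξ : G →L[ℝ] ℝ, (∀ w ∈ τ, ξ w = 0) → ξ v = 0) : v ∈ τ := by
  have hperp : v - (τ.orthogonalProjectionOnto v : G) ∈ τᗮ :=
    τ.sub_starProjection_mem_orthogonal v
  have hvan : ∀ w ∈ τ, (innerSL ℝ (v - (τ.orthogonalProjectionOnto v : G))) w = 0 := by
    intro w hw
    have h' := (Submodule.mem_orthogonal τ _).1 hperp w hw
    rw [real_inner_comm] at h'
    exact h'
  have h0 : (innerSL ℝ (v - (τ.orthogonalProjectionOnto v : G))) v = 0 := h _ hvan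
  have h1 : (innerSL ℝ (v - (τ.orthogonalProjectionOnto v : G)))
      ((τ.orthogonalProjectionOnto v : G)) = 0 := hvan _ (τ.orthogonalProjectionOnto v).2
  have h2 : (inner ℝ (v - (τ.orthogonalProjectionOnto v : G))
      (v - (τ.orthogonalProjectionOnto v : G)) : ℝ) = 0 := by
    rw [inner_sub_right]
    simp only [innerSL_apply_apply] at h0 h1
    rw [h0, h1, sub_zero]
  have h3 : v - (τ.orthogonalProjectionOnto v : G) = 0 := by
    exact inner_self_eq_zero.1 h2
  have : v = (τ.orthogonalProjectionOnto v : G) := by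
    rwa [sub_eq_zero] at h3
  rw [this]
  exact (τ.orthogonalProjectionOnto v).2

/-- Compactness of the Grassmannian: from a sequence of `k`-dimensional subspaces,
extract a subsequence converging (lower sense) to an orthonormal `k`-frame. -/
lemma grass_compact (k : ℕ) (W : ℕ → Submodule ℝ G)
    (hW : ∀ n, Module.finrank ℝ (W n) = k) :
    ∃ φ : ℕ → ℕ, StrictMono φ ∧ ∃ g : Fin k → G, Orthonormal ℝ g ∧
      ∃ v : ℕ → Fin k → G, (∀ n i, v n i ∈ W (φ n)) ∧
        ∀ i, Tendsto (fun n => v n i) atTop (nhds (g i)) := by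
  -- choose orthonormal bases
  have hb : ∀ n, ∃ b : Fin k → G, Orthonormal ℝ b ∧ ∀ i, b i ∈ W n := by
    intro n
    haveI : FiniteDimensional ℝ (W n) := inferInstance
    let o := (stdOrthonormalBasis ℝ (W n)).reindex (finCongr (hW n))
    refine ⟨fun i => (o i : G), ?_, fun i => (o i).2⟩
    rw [orthonormal_iff_ite]
    intro i j
    have := o.orthonormal
    rw [orthonormal_iff_ite] at this
    simpa [Submodule.coe_inner] using this i j
  choose b hbon hbmem using hb
  -- bounded in the pi space
  have hball : ∀ n, b n ∈ Metric.closedBall (0 : Fin k → G) 1 := by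
    intro n
    rw [Metric.mem_closedBall, dist_zero_right, pi_norm_le_iff_of_nonneg zero_le_one]
    intro i
    simpa using ((hbon n).1 i).le
  obtain ⟨g, -, φ, hφ, hconv⟩ := tendsto_subseq_of_bounded Metric.isBounded_closedBall hball
  have hcomp : ∀ i, Tendsto (fun n => b (φ n) i) atTop (nhds (g i)) := by
    intro i
    exact (tendsto_pi_nhds.1 hconv) i
  refine ⟨φ, hφ, g, ?_, fun n => b (φ n), fun n i => hbmem (φ n) i, hcomp⟩
  rw [orthonormal_iff_ite]
  intro i j
  have h1 : Tendsto (fun n => (inner ℝ (b (φ n) i) (b (φ n) j) : ℝ)) atTop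
      (nhds (inner ℝ (g i) (g j))) := ((hcomp i).inner (hcomp j))
  have h2 : (fun n => (inner ℝ (b (φ n) i) (b (φ n) j) : ℝ)) =
      fun _ => if i = j then (1:ℝ) else 0 := by
    funext n
    have := hbon (φ n)
    rw [orthonormal_iff_ite] at this
    exact this i j
  rw [h2] at h1
  exact (tendsto_nhds_unique tendsto_const_nhds h1).symm


end AuxiliaryLemmas


variable {E F : Type*}
  [NormedAddCommGroup E] [NormedSpace ℝ E] [FiniteDimensional ℝ E]
  [NormedAddCommGroup F] [NormedSpace ℝ F] [FiniteDimensional ℝ F]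

/-- Convergence of a sequence of planes to `τ` in the Grassmannian. -/
def PlanesTendsto (W : ℕ → Set E) (τ : Submodule ℝ E) : Prop :=
  (∀ v ∈ τ, ∃ u : ℕ → E, (∀ n, u n ∈ W n) ∧ Tendsto u atTop (nhds v)) ∧
  ∀ n, ∃ Wn : Submodule ℝ E, W n = ↑Wn ∧ Module.finrank ℝ Wn = Module.finrank ℝ τ

/-- `ker(d(f|_Z)_x) = T_x Z ∩ ker f`, the relative tangent plane of `Z` at `x`
for the (linear model of a) submersion `f`. -/
def relKer (f : E →L[ℝ] F) (Z : Set E) (x : E) : Set E :=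
  tangentConeAt ℝ Z x ∩ ↑(LinearMap.ker (f : E →ₗ[ℝ] F))

/-- Thom's condition `A_f` for the pair `(X₀, X₁)`: for every `x₀ ∈ X₀` and
sequence `x_i ∈ X₁ → x₀` whose relative tangent planes `ker(d(f|_{X₁})_{x_i})`
converge to a plane `τ`, one has `ker(d(f|_{X₀})_{x₀}) ⊆ τ`. -/
def ConditionAf (f : E →L[ℝ] F) (X₀ X₁ : Set E) : Prop :=
  ∀ x₀ ∈ X₀, ∀ x : ℕ → E, (∀ n, x n ∈ X₁) → Tendsto x atTop (nhds x₀) →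
    ∀ τ : Submodule ℝ E, PlanesTendsto (fun n => relKer f X₁ (x n)) τ →
      relKer f X₀ x₀ ⊆ ↑τ

/-- The image `Π(T*_Z X)` of the conormal bundle of `Z` in the relative
cotangent bundle `T*_f ≅ X × (ker f)*`: over `x ∈ Z` it is the annihilator of
`ker(d(f|_Z)_x)` in `(ker f)*`. -/
def relConormal (f : E →L[ℝ] F) (Z : Set E) :
    Set (E × (↥(LinearMap.ker (f : E →ₗ[ℝ] F)) →L[ℝ] ℝ)) :=
  {p | p.1 ∈ Z ∧ ∀ v : ↥(LinearMap.ker (f : E →ₗ[ℝ] F)), (v : E) ∈ tangentConeAt ℝ Z p.1 → p.2 v = 0}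

/-- Lemma 4.8: for a submersion `f` and submanifolds `X₀, X₁` with `f|_{X₀}`,
`f|_{X₁}` of constant rank, the pair `(X₀, X₁)` satisfies Thom's condition `A_f`
if and only if the closure of `Π(T*_{X₁}X)` in the relative cotangent bundle,
restricted over `X₀`, is contained in `Π(T*_{X₀}X)`. -/
theorem stmt_7 (f : E →L[ℝ] F) (hf : Function.Surjective f) (X₀ X₁ : Set E)
    (hX₀ : ∃ d k : ℕ, ∀ x ∈ X₀, ∃ W : Submodule ℝ E,
      tangentConeAt ℝ X₀ x = ↑W ∧ Module.finrank ℝ W = d ∧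
      Module.finrank ℝ (W ⊓ LinearMap.ker (f : E →ₗ[ℝ] F) : Submodule ℝ E) = k)
    (hX₁ : ∃ d k : ℕ, ∀ x ∈ X₁, ∃ W : Submodule ℝ E,
      tangentConeAt ℝ X₁ x = ↑W ∧ Module.finrank ℝ W = d ∧
      Module.finrank ℝ (W ⊓ LinearMap.ker (f : E →ₗ[ℝ] F) : Submodule ℝ E) = k) :
    ConditionAf f X₀ X₁ ↔
      closure (relConormal f X₁) ∩ {p | p.1 ∈ X₀} ⊆ relConormal f X₀ := by
  classical
  set K : Submodule ℝ E := LinearMap.ker (f : E →ₗ[ℝ] F) with hK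
  letI : FiniteDimensional ℝ ↥K := inferInstance
  set e : ↥K ≃L[ℝ] EuclideanSpace ℝ (Fin (Module.finrank ℝ ↥K)) := toEuclidean with he
  constructor
  · -- Condition A_f implies closure inclusion
    intro hA p hp
    obtain ⟨hpc, hp0⟩ := hp
    rw [mem_closure_iff_seq_limit] at hpc
    obtain ⟨q, hqmem, hqt⟩ := hpc
    obtain ⟨d1, k1, hW1⟩ := hX₁
    have hx1 : ∀ n, (q n).1 ∈ X₁ := fun n => (hqmem n).1
    have hxt : Tendsto (fun n => (q n).1) atTop (nhds p.1) :=
      (continuous_fst.tendsto p).comp hqt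
    have hξt : Tendsto (fun n => (q n).2) atTop (nhds p.2) :=
      (continuous_snd.tendsto p).comp hqt
    choose W hWcone hWd hWk using fun n => hW1 (q n).1 (hx1 n)
    -- the relative tangent planes
    have hrel : ∀ n, relKer f X₁ (q n).1 = ↑(W n ⊓ K) := by
      intro n
      rw [relKer, hWcone n, Submodule.coe_inf]
    -- move to Euclidean coordinates
    set σG : ℕ → Submodule ℝ (EuclideanSpace ℝ (Fin (Module.finrank ℝ ↥K))) :=
      fun n => ((W n ⊓ K).comap K.subtype).map (e.toLinearEquiv : _ →ₗ[ℝ] _) with hσG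
    have hσGrank : ∀ n, Module.finrank ℝ (σG n) = k1 := by
      intro n
      rw [hσG]
      rw [LinearEquiv.finrank_map_eq]
      rw [(Submodule.comapSubtypeEquivOfLe (inf_le_right :
        W n ⊓ K ≤ K)).finrank_eq]
      exact hWk n
    obtain ⟨φ, hφ, g, hgon, v, hvmem, hvt⟩ := grass_compact k1 σG hσGrank
    set τG := Submodule.span ℝ (Set.range g) with hτG
    have hτGrank : Module.finrank ℝ τG = k1 := by
      rw [hτG, finrank_span_eq_card hgon.linearIndependent, Fintype.card_fin]
    set τK : Submodule ℝ ↥K := τG.map (e.symm.toLinearEquiv : _ →ₗ[ℝ] _) with hτK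
    set τE : Submodule ℝ E := τK.map K.subtype with hτE
    have hback : ∀ n z, z ∈ σG n → ((e.symm z : ↥K) : E) ∈ (↑(W n ⊓ K) : Set E) := by
      intro n z hz
      rw [hσG] at hz
      obtain ⟨y, hy, hyz⟩ := Submodule.mem_map.1 hz
      have : e.symm z = y := by
        rw [← hyz]; simp
      rw [this]
      exact Submodule.mem_comap.1 hy
    have hτErank : Module.finrank ℝ τE = k1 := by
      rw [hτE, ← LinearEquiv.finrank_eq
        (Submodule.equivMapOfInjective K.subtype K.injective_subtype τK), hτK,
        LinearEquiv.finrank_map_eq, hτGrank]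
    have hPT : PlanesTendsto (fun n => relKer f X₁ ((q (φ n)).1)) τE := by
      constructor
      · intro w hw
        obtain ⟨vK, hvK, hvKw⟩ := Submodule.mem_map.1 hw
        obtain ⟨z, hz, hzv'⟩ := Submodule.mem_map.1 hvK
        have hzv : e.symm z = vK := hzv'
        rw [hτG] at hz
        obtain ⟨c, hc⟩ := (Submodule.mem_span_range_iff_exists_fun ℝ).1 hz
        refine ⟨fun n => ↑(e.symm (∑ i, c i • v n i)), ?_, ?_⟩
        · intro n
          beta_reduce
          rw [hrel (φ n)]
          exact hback _ _ (Submodule.sum_smul_mem _ _ fun i _ => hvmem n i)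
        · have h1 : Tendsto (fun n => ∑ i, c i • v n i) atTop (nhds (∑ i, c i • g i)) :=
            tendsto_finset_sum _ fun i _ => (hvt i).const_smul (c i)
          have h2 := ((e.symm.continuous.tendsto _).comp h1)
          have h3 := (continuous_subtype_val.tendsto _).comp h2
          rw [hc] at h3
          simp only [Function.comp_def] at h3
          rw [hzv] at h3
          rw [← hvKw]
          exact h3
      · intro n
        refine ⟨W (φ n) ⊓ K, hrel (φ n), ?_⟩
        rw [hWk (φ n), hτErank]
    have hsub := hA p.1 hp0 (fun n => (q (φ n)).1) (fun n => hx1 (φ n))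
      (hxt.comp hφ.tendsto_atTop) τE hPT
    refine ⟨hp0, ?_⟩
    intro vK hvcone
    have hmem : (↑vK : E) ∈ relKer f X₀ p.1 := ⟨hvcone, vK.2⟩
    have hvτ : (↑vK : E) ∈ (↑τE : Set E) := hsub hmem
    obtain ⟨yK, hyK, hy⟩ := Submodule.mem_map.1 hvτ
    have hyv : yK = vK := Subtype.coe_injective hy
    rw [hyv] at hyK
    obtain ⟨z, hz, hzv'⟩ := Submodule.mem_map.1 hyK
    have hzv : e.symm z = vK := hzv'
    rw [hτG] at hz
    obtain ⟨c, hc⟩ := (Submodule.mem_span_range_iff_exists_fun ℝ).1 hz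
    have huKmem : ∀ n, ((e.symm (∑ i, c i • v n i) : ↥K) : E) ∈ (↑(W (φ n) ⊓ K) : Set E) :=
      fun n => hback _ _ (Submodule.sum_smul_mem _ _ fun i _ => hvmem n i)
    have hcone : ∀ n, ((e.symm (∑ i, c i • v n i) : ↥K) : E) ∈
        tangentConeAt ℝ X₁ (q (φ n)).1 := by
      intro n
      have := huKmem n
      rw [Submodule.coe_inf] at this
      rw [← hWcone (φ n)] at this
      exact this.1
    have hvanish : ∀ n, (q (φ n)).2 (e.symm (∑ i, c i • v n i)) = 0 :=
      fun n => (hqmem (φ n)).2 _ (hcone n)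
    have huKt : Tendsto (fun n => e.symm (∑ i, c i • v n i)) atTop (nhds vK) := by
      have h1 : Tendsto (fun n => ∑ i, c i • v n i) atTop (nhds (∑ i, c i • g i)) :=
        tendsto_finset_sum _ fun i _ => (hvt i).const_smul (c i)
      have h2 := (e.symm.continuous.tendsto _).comp h1
      rw [hc] at h2
      simp only [Function.comp_def] at h2
      rw [hzv] at h2
      exact h2
    have happ : Tendsto (fun n => (q (φ n)).2 (e.symm (∑ i, c i • v n i))) atTop
        (nhds (p.2 vK)) :=
      ((isBoundedBilinearMap_apply (𝕜 := ℝ) (E := ↥(LinearMap.ker (f : E →ₗ[ℝ] F)))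
        (F := ℝ)).continuous.tendsto (p.2, vK)).comp
        ((hξt.comp hφ.tendsto_atTop).prodMk_nhds huKt)
    have h0 : Tendsto (fun n => (q (φ n)).2 (e.symm (∑ i, c i • v n i))) atTop
        (nhds (0 : ℝ)) := by
      simp only [hvanish]
      exact tendsto_const_nhds
    exact tendsto_nhds_unique happ h0
  · intro hC x₀ hx₀ x hx1 hxt τ hPT
    obtain ⟨hlow, hdim⟩ := hPT
    intro w hw
    have hτle : τ ≤ K := by
      intro a ha
      obtain ⟨u, humem, hut⟩ := hlow a ha
      have hcl : IsClosed (↑K : Set E) := ContinuousLinearMap.isClosed_ker f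
      refine hcl.mem_of_tendsto hut (Eventually.of_forall fun n => ?_)
      exact (humem n).2
    choose Wn hWneq' hWnrank using hdim
    have hWneq : ∀ n, relKer f X₁ (x n) = ↑(Wn n) := hWneq'
    have hWnle : ∀ n, Wn n ≤ K := by
      intro n a ha
      have h2 : a ∈ relKer f X₁ (x n) := by rw [hWneq n]; exact ha
      exact h2.2
    set τK : Submodule ℝ ↥K := τ.comap K.subtype with hτK
    set τG : Submodule ℝ (EuclideanSpace ℝ (Fin (Module.finrank ℝ ↥K))) :=
      τK.map (e.toLinearEquiv : _ →ₗ[ℝ] _) with hτG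
    set σK : ℕ → Submodule ℝ ↥K := fun n => (Wn n).comap K.subtype with hσK
    set σG : ℕ → Submodule ℝ (EuclideanSpace ℝ (Fin (Module.finrank ℝ ↥K))) :=
      fun n => (σK n).map (e.toLinearEquiv : _ →ₗ[ℝ] _) with hσG
    have hτGrank : Module.finrank ℝ τG = Module.finrank ℝ τ := by
      rw [hτG, LinearEquiv.finrank_map_eq, hτK,
        (Submodule.comapSubtypeEquivOfLe hτle).finrank_eq]
    have hσGrank : ∀ n, Module.finrank ℝ (σG n) = Module.finrank ℝ τ := by
      intro n
      rw [hσG]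
      beta_reduce
      rw [LinearEquiv.finrank_map_eq, hσK]
      beta_reduce
      rw [(Submodule.comapSubtypeEquivOfLe (hWnle n)).finrank_eq]
      exact hWnrank n
    have hlowG : ∀ vG ∈ τG, ∃ uG : ℕ → EuclideanSpace ℝ (Fin (Module.finrank ℝ ↥K)),
        (∀ n, uG n ∈ σG n) ∧ Tendsto uG atTop (nhds vG) := by
      intro vG hvG
      obtain ⟨vk, hvk, hvkz'⟩ := Submodule.mem_map.1 hvG
      have hvkz : e vk = vG := hvkz'
      have hv : (↑vk : E) ∈ τ := Submodule.mem_comap.1 hvk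
      obtain ⟨u, humem, hut⟩ := hlow ↑vk hv
      have hukm : ∀ n, u n ∈ (↑K : Set E) := fun n => (humem n).2
      have hukmem : ∀ n, (⟨u n, hukm n⟩ : ↥K) ∈ σK n := by
        intro n
        have h2 : u n ∈ relKer f X₁ (x n) := humem n
        rw [hWneq n] at h2
        exact Submodule.mem_comap.2 h2
      have hukt : Tendsto (fun n => (⟨u n, hukm n⟩ : ↥K)) atTop (nhds vk) :=
        tendsto_subtype_rng.2 (by simpa using hut)
      refine ⟨fun n => e (⟨u n, hukm n⟩ : ↥K),
        fun n => Submodule.mem_map_of_mem (hukmem n), ?_⟩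
      have h3 := (e.continuous.tendsto _).comp hukt
      rw [hvkz] at h3
      exact h3
    have hwKmem : w ∈ (↑K : Set E) := hw.2
    have hwmem : e (⟨w, hwKmem⟩ : ↥K) ∈ τG := by
      apply mem_of_forall_annih
      intro ξG hξG
      obtain ⟨ξs, hvanish, hξst⟩ :=
        annih_approx (Module.finrank ℝ τ) τG σG hτGrank hσGrank hlowG ξG hξG
      have hqmem : ∀ n, ((x n, (ξs n).comp (e : ↥K →L[ℝ] _)) :
          E × (↥(LinearMap.ker (f : E →ₗ[ℝ] F)) →L[ℝ] ℝ)) ∈ relConormal f X₁ := by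
        intro n
        refine ⟨hx1 n, ?_⟩
        intro vk hvkcone
        have h2 : (↑vk : E) ∈ relKer f X₁ (x n) := ⟨hvkcone, vk.2⟩
        rw [hWneq n] at h2
        have h3 : e vk ∈ σG n := Submodule.mem_map_of_mem (Submodule.mem_comap.2 h2)
        exact hvanish n _ h3
      have hqt : Tendsto (fun n => ((x n, (ξs n).comp (e : ↥K →L[ℝ] _)) :
          E × (↥(LinearMap.ker (f : E →ₗ[ℝ] F)) →L[ℝ] ℝ))) atTop
          (nhds (x₀, ξG.comp (e : ↥K →L[ℝ] _))) := by
        refine Tendsto.prodMk_nhds hxt ?_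
        have hc := (isBoundedBilinearMap_comp (𝕜 := ℝ) (E := ↥K)
          (F := EuclideanSpace ℝ (Fin (Module.finrank ℝ ↥K))) (G := ℝ)).continuous
        exact (hc.tendsto (ξG, (e : ↥K →L[ℝ] _))).comp
          (hξst.prodMk_nhds tendsto_const_nhds)
      have hcl : ((x₀, ξG.comp (e : ↥K →L[ℝ] _)) :
          E × (↥(LinearMap.ker (f : E →ₗ[ℝ] F)) →L[ℝ] ℝ)) ∈ closure (relConormal f X₁) :=
        mem_closure_of_tendsto hqt (Eventually.of_forall hqmem)
      have hfin := hC ⟨hcl, hx₀⟩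
      have h4 := hfin.2 (⟨w, hwKmem⟩ : ↥K) hw.1
      simpa using h4
    have hwK : (⟨w, hwKmem⟩ : ↥K) ∈ τK := by
      rw [hτG] at hwmem
      obtain ⟨yk, hyk, hy⟩ := Submodule.mem_map.1 hwmem
      have hy' : e yk = e (⟨w, hwKmem⟩ : ↥K) := hy
      have : yk = (⟨w, hwKmem⟩ : ↥K) := e.injective hy'
      rwa [this] at hyk
    exact Submodule.mem_comap.1 hwK
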